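/- Let n ≥ 0 be an integer and let r₁, r₂, r₃ be real numbers with r₁ > 0 and r₂² + r₃ > 0. Then the integral J_n(r₁,r₂,r₃) = ∫₀^∞ y^{n-2} H_n(√π (r₁ y + r₂ y⁻¹)) e^{-π (r₁ y + r₂ y⁻¹)² - π r₃ y⁻²} dy converges and equals 2^{n-1} π^{n/2} ((r₂² + r₃)^{1/2} + r₂)^n (r₂² + r₃)^{-1/2} e^{-2π r₁ ((r₂² + r₃)^{1/2} + r₂)}. -/

import Mathlib

set_option maxHeartbeats 1000000

open MeasureTheory Real

/-- Physicists' Hermite polynomial `H_n(x) = (-1)^n e^{x²} (d/dx)^n e^{-x²}`. -/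
noncomputable def physHermite (n : ℕ) (x : ℝ) : ℝ :=
  (-1) ^ n * Real.exp (x ^ 2) * iteratedDeriv n (fun y => Real.exp (-y ^ 2)) x

noncomputable def hermP : ℕ → Polynomial ℝ
  | 0 => 1
  | n + 1 => 2 * Polynomial.X * hermP n - (hermP n).derivative

lemma iteratedDeriv_gauss (n : ℕ) :
    iteratedDeriv n (fun y : ℝ => Real.exp (-y ^ 2)) =
      fun x => (-1) ^ n * (hermP n).eval x * Real.exp (-x ^ 2) := by
  induction n with
  | zero => funext x; simp [hermP]
  | succ n ih =>
    funext x
    rw [iteratedDeriv_succ, ih]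
    have h1 : HasDerivAt (fun x : ℝ => Real.exp (-x ^ 2)) (Real.exp (-x ^ 2) * (-(2 * x))) x := by
      have : HasDerivAt (fun x : ℝ => -x ^ 2) (-(2 * x)) x := by
        simpa using ((hasDerivAt_pow 2 x).fun_neg)
      simpa using this.exp
    have h2 : HasDerivAt (fun x : ℝ => (-1 : ℝ) ^ n * (hermP n).eval x * Real.exp (-x ^ 2))
        ((-1 : ℝ) ^ n * ((hermP n).derivative.eval x * Real.exp (-x ^ 2) +
          (hermP n).eval x * (Real.exp (-x ^ 2) * (-(2 * x))))) x := by
      have hp := (hermP n).hasDerivAt x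
      simpa [mul_assoc, mul_add] using ((hp.mul h1).const_mul ((-1 : ℝ) ^ n))
    rw [h2.deriv]
    simp only [hermP, Polynomial.eval_sub, Polynomial.eval_mul, Polynomial.eval_ofNat,
      Polynomial.eval_X]
    ring

lemma physHermite_eq (n : ℕ) (x : ℝ) : physHermite n x = (hermP n).eval x := by
  unfold physHermite
  rw [iteratedDeriv_gauss]
  have h : Real.exp (x ^ 2) * Real.exp (-x ^ 2) = 1 := by
    rw [← Real.exp_add]; simp
  have h2 : ((-1 : ℝ)) ^ n * (-1 : ℝ) ^ n = 1 := by
    rw [← mul_pow]; norm_num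
  calc (-1:ℝ) ^ n * Real.exp (x ^ 2) * ((-1) ^ n * (hermP n).eval x * Real.exp (-x ^ 2))
      = ((-1:ℝ) ^ n * (-1) ^ n) * (Real.exp (x ^ 2) * Real.exp (-x ^ 2)) * (hermP n).eval x := by
        ring
    _ = (hermP n).eval x := by rw [h2, h]; ring

lemma hasDerivAt_hermGauss (n : ℕ) (x : ℝ) :
    HasDerivAt (fun t => (hermP n).eval t * Real.exp (-t ^ 2))
      (-((hermP (n + 1)).eval x * Real.exp (-x ^ 2))) x := by
  have h1 : HasDerivAt (fun x : ℝ => Real.exp (-x ^ 2)) (Real.exp (-x ^ 2) * (-(2 * x))) x := by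
    have : HasDerivAt (fun x : ℝ => -x ^ 2) (-(2 * x)) x := by
      simpa using ((hasDerivAt_pow 2 x).fun_neg)
    simpa using this.exp
  have h2 := ((hermP n).hasDerivAt x).mul h1
  refine h2.congr_deriv ?_
  simp only [hermP, Polynomial.eval_sub, Polynomial.eval_mul, Polynomial.eval_ofNat,
    Polynomial.eval_X]
  ring

lemma abs_pow_le_exp {ε : ℝ} (hε : 0 < ε) (i : ℕ) (x : ℝ) :
    |x| ^ i ≤ (1 + i.factorial / ε ^ i) * Real.exp (ε * x ^ 2) := by
  have hexp1 : (1 : ℝ) ≤ Real.exp (ε * x ^ 2) := by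
    apply Real.one_le_exp; positivity
  have hfac : (0:ℝ) < i.factorial / ε ^ i := by positivity
  rcases le_or_gt (|x|) 1 with hx | hx
  · calc |x| ^ i ≤ 1 ^ i := pow_le_pow_left₀ (abs_nonneg x) hx i
      _ = 1 := one_pow i
      _ ≤ (1 + i.factorial / ε ^ i) * Real.exp (ε * x ^ 2) := by nlinarith
  · have key : (ε * x ^ 2) ^ i / i.factorial ≤ Real.exp (ε * x ^ 2) := by
      have h := Real.sum_le_exp_of_nonneg (by positivity : (0:ℝ) ≤ ε * x ^ 2) (i + 1)
      refine le_trans ?_ h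
      exact Finset.single_le_sum (f := fun j => (ε * x ^ 2) ^ j / j.factorial)
        (fun j _ => by positivity) (Finset.self_mem_range_succ i)
    have h1 : |x| ^ i ≤ (x ^ 2) ^ i := by
      calc |x| ^ i ≤ (|x| ^ 2) ^ i := by
            apply pow_le_pow_left₀ (abs_nonneg x)
            nlinarith [abs_nonneg x]
        _ = (x ^ 2) ^ i := by rw [sq_abs]
    have h2 : (x ^ 2) ^ i ≤ i.factorial / ε ^ i * Real.exp (ε * x ^ 2) := by
      have hme : (ε * x ^ 2) ^ i = ε ^ i * (x ^ 2) ^ i := by rw [mul_pow]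
      rw [hme] at key
      have hεi : (0:ℝ) < ε ^ i := by positivity
      have hfi : (0:ℝ) < (i.factorial:ℝ) := by positivity
      rw [div_le_iff₀ hfi] at key
      rw [div_mul_eq_mul_div, le_div_iff₀ hεi]
      nlinarith [key]
    calc |x| ^ i ≤ (x ^ 2) ^ i := h1
      _ ≤ i.factorial / ε ^ i * Real.exp (ε * x ^ 2) := h2
      _ ≤ (1 + i.factorial / ε ^ i) * Real.exp (ε * x ^ 2) := by nlinarith


lemma poly_growth (p : Polynomial ℝ) {ε : ℝ} (hε : 0 < ε) :
    ∃ C : ℝ, 0 ≤ C ∧ ∀ x : ℝ, |p.eval x| ≤ C * Real.exp (ε * x ^ 2) := by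
  refine ⟨∑ i ∈ Finset.range (p.natDegree + 1), |p.coeff i| * (1 + i.factorial / ε ^ i), ?_, ?_⟩
  · apply Finset.sum_nonneg
    intro i _
    have : (0:ℝ) < 1 + i.factorial / ε ^ i := by positivity
    positivity
  · intro x
    rw [Polynomial.eval_eq_sum_range]
    calc |∑ i ∈ Finset.range (p.natDegree + 1), p.coeff i * x ^ i|
        ≤ ∑ i ∈ Finset.range (p.natDegree + 1), |p.coeff i * x ^ i| :=
          Finset.abs_sum_le_sum_abs _ _
      _ ≤ ∑ i ∈ Finset.range (p.natDegree + 1),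
            |p.coeff i| * ((1 + i.factorial / ε ^ i) * Real.exp (ε * x ^ 2)) := by
          apply Finset.sum_le_sum
          intro i _
          rw [abs_mul, abs_pow]
          exact mul_le_mul_of_nonneg_left (abs_pow_le_exp hε i x) (abs_nonneg _)
      _ = (∑ i ∈ Finset.range (p.natDegree + 1), |p.coeff i| * (1 + i.factorial / ε ^ i)) *
            Real.exp (ε * x ^ 2) := by
          rw [Finset.sum_mul]
          exact Finset.sum_congr rfl fun i _ => (mul_assoc _ _ _).symm

lemma contOn_aux (k : ℝ) (a b : ℝ) :
    ContinuousOn (fun y : ℝ => y ^ k * Real.exp (-a * y ^ 2 - b * y⁻¹ ^ 2)) (Set.Ioi 0) := by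
  apply ContinuousOn.mul
  · exact fun y hy => (Real.continuousAt_rpow_const y k (Or.inl (ne_of_gt hy))).continuousWithinAt
  · apply Continuous.comp_continuousOn Real.continuous_exp
    apply ContinuousOn.sub
    · exact (continuous_const.mul (continuous_pow 2)).continuousOn
    · exact continuousOn_const.mul (((continuousOn_inv₀).mono
        (fun y (hy : y ∈ Set.Ioi (0:ℝ)) => ne_of_gt hy)).pow 2)

lemma integrableOn_aux {a b : ℝ} (ha : 0 < a) (hb : 0 < b) (k : ℝ) :
    IntegrableOn (fun y : ℝ => y ^ k * Real.exp (-a * y ^ 2 - b * y⁻¹ ^ 2)) (Set.Ioi 0) := by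
  have hmeas : ∀ s : Set ℝ, s ⊆ Set.Ioi 0 → MeasurableSet s →
      AEStronglyMeasurable (fun y : ℝ => y ^ k * Real.exp (-a * y ^ 2 - b * y⁻¹ ^ 2))
        (volume.restrict s) := by
    intro s hs hsm
    exact ((contOn_aux k a b).mono hs).aestronglyMeasurable hsm
  rw [← Set.Ioc_union_Ioi_eq_Ioi (le_of_lt one_pos), integrableOn_union]
  constructor
  · -- on (0,1]: bounded
    obtain ⟨m, hm⟩ := exists_nat_ge (-k / 2)
    have hkm : 0 ≤ k + 2 * m := by linarith
    apply Integrable.mono' (g := fun _ : ℝ => (m.factorial : ℝ) / b ^ m)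
      (integrableOn_const measure_Ioc_lt_top.ne)
    · exact hmeas _ (Set.Ioc_subset_Ioi_self) measurableSet_Ioc
    · filter_upwards [ae_restrict_mem measurableSet_Ioc] with y hy
      obtain ⟨hy0, hy1⟩ := hy
      have key : (b * y⁻¹ ^ 2) ^ m / m.factorial ≤ Real.exp (b * y⁻¹ ^ 2) := by
        refine le_trans ?_ (Real.sum_le_exp_of_nonneg (by positivity) (m + 1))
        exact Finset.single_le_sum (f := fun j => (b * y⁻¹ ^ 2) ^ j / j.factorial)
          (fun j _ => by positivity) (Finset.self_mem_range_succ m)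
      have hq : (0:ℝ) < (b * y⁻¹ ^ 2) ^ m / m.factorial := by positivity
      have h2 : Real.exp (-(b * y⁻¹ ^ 2)) ≤ ((b * y⁻¹ ^ 2) ^ m / m.factorial)⁻¹ := by
        rw [Real.exp_neg]
        exact inv_anti₀ hq key
      have h3 : ((b * y⁻¹ ^ 2) ^ m / m.factorial)⁻¹ =
          (m.factorial / b ^ m) * y ^ (2 * m) := by
        have hyne : y ≠ 0 := ne_of_gt hy0
        rw [mul_pow, ← pow_mul, inv_pow, inv_div, div_mul_eq_div_div, div_inv_eq_mul]
      have h4 : Real.exp (-a * y ^ 2 - b * y⁻¹ ^ 2) ≤ Real.exp (-(b * y⁻¹ ^ 2)) := by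
        apply Real.exp_le_exp.mpr; nlinarith [sq_nonneg y]
      rw [Real.norm_eq_abs, abs_mul, abs_of_nonneg (Real.rpow_nonneg hy0.le k),
        abs_of_nonneg (Real.exp_pos _).le]
      calc y ^ k * Real.exp (-a * y ^ 2 - b * y⁻¹ ^ 2)
          ≤ y ^ k * ((m.factorial / b ^ m) * y ^ (2 * m)) := by
            refine mul_le_mul_of_nonneg_left ?_ (Real.rpow_nonneg hy0.le k)
            rw [← h3]; exact le_trans h4 h2
        _ = (m.factorial / b ^ m) * (y ^ k * y ^ ((2 * m : ℕ) : ℝ)) := by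
            rw [Real.rpow_natCast]; ring
        _ = (m.factorial / b ^ m) * y ^ (k + ((2 * m : ℕ) : ℝ)) := by
            rw [Real.rpow_add hy0]
        _ ≤ (m.factorial / b ^ m) * 1 := by
            refine mul_le_mul_of_nonneg_left ?_ (by positivity)
            apply Real.rpow_le_one hy0.le hy1
            push_cast; linarith
        _ = m.factorial / b ^ m := mul_one _
  · -- on (1,∞)
    obtain ⟨m, hm⟩ := exists_nat_ge k
    apply Integrable.mono' (g := fun y : ℝ => y ^ (m : ℝ) * Real.exp (-a * y ^ 2))
      (((integrableOn_rpow_mul_exp_neg_mul_sq ha (lt_of_lt_of_le (by norm_num) (Nat.cast_nonneg m))).mono_set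
        (Set.Ioi_subset_Ioi (le_of_lt one_pos))))
    · exact hmeas _ (fun y hy => Set.mem_Ioi.mpr (lt_trans one_pos hy)) measurableSet_Ioi
    · filter_upwards [ae_restrict_mem measurableSet_Ioi] with y hy
      have hy1 : (1:ℝ) ≤ y := le_of_lt hy
      have hy0 : (0:ℝ) < y := lt_of_lt_of_le one_pos hy1
      rw [Real.norm_eq_abs, abs_mul, abs_of_nonneg (Real.rpow_nonneg hy0.le k),
        abs_of_nonneg (Real.exp_pos _).le]
      have h1 : y ^ k ≤ y ^ (m : ℝ) := Real.rpow_le_rpow_of_exponent_le hy1 hm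
      have h2 : Real.exp (-a * y ^ 2 - b * y⁻¹ ^ 2) ≤ Real.exp (-a * y ^ 2) := by
        apply Real.exp_le_exp.mpr
        nlinarith [sq_nonneg y⁻¹]
      calc y ^ k * Real.exp (-a * y ^ 2 - b * y⁻¹ ^ 2)
          ≤ y ^ (m:ℝ) * Real.exp (-a * y ^ 2 - b * y⁻¹ ^ 2) :=
            mul_le_mul_of_nonneg_right h1 (Real.exp_pos _).le
        _ ≤ y ^ (m:ℝ) * Real.exp (-a * y ^ 2) :=
            mul_le_mul_of_nonneg_left h2 (Real.rpow_nonneg hy0.le _)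


lemma integrableOn_I1 {c s : ℝ} (hc : 0 < c) (hs : 0 < s) :
    IntegrableOn (fun y : ℝ => Real.exp (-π * (c * y - s * y⁻¹) ^ 2)) (Set.Ioi 0) := by
  have h := (integrableOn_aux (by positivity : (0:ℝ) < π * c ^ 2)
    (by positivity : (0:ℝ) < π * s ^ 2) 0).const_mul (Real.exp (2 * π * c * s))
  apply IntegrableOn.congr_fun h ?_ measurableSet_Ioi
  intro y hy
  have hyne : (y:ℝ) ≠ 0 := ne_of_gt hy
  simp only [Real.rpow_zero, one_mul, ← Real.exp_add]
  congr 1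
  have hinv : y * y⁻¹ = 1 := mul_inv_cancel₀ hyne
  linear_combination (-(2*π*c*s)) * hinv

lemma integrableOn_I2 {c s : ℝ} (hc : 0 < c) (hs : 0 < s) :
    IntegrableOn (fun y : ℝ => y⁻¹ ^ 2 * Real.exp (-π * (c * y - s * y⁻¹) ^ 2)) (Set.Ioi 0) := by
  have h := (integrableOn_aux (by positivity : (0:ℝ) < π * c ^ 2)
    (by positivity : (0:ℝ) < π * s ^ 2) (-2)).const_mul (Real.exp (2 * π * c * s))
  apply IntegrableOn.congr_fun h ?_ measurableSet_Ioi
  intro y hy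
  have hyne : (y:ℝ) ≠ 0 := ne_of_gt hy
  have hrp : y ^ (-2 : ℝ) = y⁻¹ ^ 2 := by
    rw [Real.rpow_neg (le_of_lt hy), show (2:ℝ) = ((2:ℕ):ℝ) by norm_num,
      Real.rpow_natCast, inv_pow]
  simp only []
  rw [hrp, show Real.exp (2*π*c*s) * (y⁻¹^2 * Real.exp (-(π*c^2) * y^2 - π*s^2 * y⁻¹^2))
    = y⁻¹^2 * (Real.exp (2*π*c*s) * Real.exp (-(π*c^2) * y^2 - π*s^2 * y⁻¹^2)) from by ring,
    ← Real.exp_add]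
  congr 2
  have hinv : y * y⁻¹ = 1 := mul_inv_cancel₀ hyne
  linear_combination (-(2*π*c*s)) * hinv

lemma image_inv_scale {c s : ℝ} (hc : 0 < c) (hs : 0 < s) :
    (fun u : ℝ => s / c * u⁻¹) '' Set.Ioi 0 = Set.Ioi 0 := by
  ext v
  constructor
  · rintro ⟨u, hu, rfl⟩
    have hu' : (0:ℝ) < u := hu
    exact Set.mem_Ioi.mpr (by positivity)
  · intro hv
    have hv' : (0:ℝ) < v := hv
    refine ⟨s / c * v⁻¹, Set.mem_Ioi.mpr (by positivity), ?_⟩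
    field_simp

lemma key_subst1 {c s : ℝ} (hc : 0 < c) (hs : 0 < s) :
    ∫ y in Set.Ioi (0:ℝ), y⁻¹ ^ 2 * Real.exp (-π * (c * y - s * y⁻¹) ^ 2)
      = (c / s) * ∫ y in Set.Ioi (0:ℝ), Real.exp (-π * (c * y - s * y⁻¹) ^ 2) := by
  have hder : ∀ u ∈ Set.Ioi (0:ℝ), HasDerivWithinAt (fun u : ℝ => s / c * u⁻¹)
      (s / c * -(u ^ 2)⁻¹) (Set.Ioi 0) u := by
    intro u hu
    exact ((hasDerivAt_inv (ne_of_gt hu)).const_mul (s / c)).hasDerivWithinAt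
  have hinj : Set.InjOn (fun u : ℝ => s / c * u⁻¹) (Set.Ioi 0) := by
    intro u hu v hv h
    have hscne : s / c ≠ 0 := by positivity
    have := mul_left_cancel₀ hscne h
    exact inv_injective this
  have := integral_image_eq_integral_abs_deriv_smul measurableSet_Ioi hder hinj
    (fun y : ℝ => y⁻¹ ^ 2 * Real.exp (-π * (c * y - s * y⁻¹) ^ 2))
  rw [image_inv_scale hc hs] at this
  rw [this, ← integral_const_mul]
  apply setIntegral_congr_fun measurableSet_Ioi
  intro u hu
  have hu' : (0:ℝ) < u := hu
  have hune : u ≠ 0 := ne_of_gt hu'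
  have habs : |s / c * -(u ^ 2)⁻¹| = s / c * (u ^ 2)⁻¹ := by
    rw [abs_of_nonpos]
    · ring
    · have h1 : (0:ℝ) < s / c := by positivity
      have h2 : (0:ℝ) < (u ^ 2)⁻¹ := by positivity
      nlinarith
  have harg : c * (s / c * u⁻¹) - s * (s / c * u⁻¹)⁻¹ = -(c * u - s * u⁻¹) := by
    field_simp
    ring
  have hsq : (s / c * u⁻¹)⁻¹ ^ 2 = (c / s) ^ 2 * u ^ 2 := by
    field_simp
  simp only [smul_eq_mul]
  rw [habs, harg, hsq, neg_sq]
  field_simp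


lemma image_sub_univ {c s : ℝ} (hc : 0 < c) (hs : 0 < s) :
    (fun y : ℝ => Real.sqrt π * (c * y - s * y⁻¹)) '' Set.Ioi 0 = Set.univ := by
  apply Set.eq_univ_of_forall
  intro t
  set q : ℝ := t / Real.sqrt π with hq
  set d : ℝ := Real.sqrt (q ^ 2 + 4 * c * s) with hd
  have hd2 : d ^ 2 = q ^ 2 + 4 * c * s := Real.sq_sqrt (by positivity)
  have hdq : |q| < d := by
    have h1 : Real.sqrt (q ^ 2) < d := by
      apply Real.sqrt_lt_sqrt (sq_nonneg q)
      nlinarith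
    rwa [Real.sqrt_sq_eq_abs] at h1
  set y : ℝ := (q + d) / (2 * c) with hyd
  have hy : (0:ℝ) < y := by
    have : -q ≤ |q| := neg_le_abs q
    rw [hyd]
    apply div_pos (by nlinarith) (by positivity)
  refine ⟨y, Set.mem_Ioi.mpr hy, ?_⟩
  have hyne : y ≠ 0 := ne_of_gt hy
  have hsπ : Real.sqrt π ≠ 0 := by positivity
  clear_value y
  have hcy : 2 * c * y = q + d := by rw [hyd]; field_simp
  clear_value q d
  have hroot4 : 4 * c * (c * y ^ 2 - q * y - s) = 0 := by
    linear_combination (2*c*y - q + d) * hcy + hd2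
  have hroot : c * y ^ 2 - q * y - s = 0 :=
    (mul_eq_zero.mp hroot4).resolve_left (by positivity)
  have hq' : t = Real.sqrt π * q := by
    rw [hq]; field_simp
  have hval : c * y - s * y⁻¹ = q := by
    field_simp
    linear_combination hroot
  show Real.sqrt π * (c * y - s * y⁻¹) = t
  rw [hval, hq']

lemma key_subst2 {c s : ℝ} (hc : 0 < c) (hs : 0 < s) :
    ∫ y in Set.Ioi (0:ℝ),
        Real.sqrt π * (c + s * y⁻¹ ^ 2) * Real.exp (-π * (c * y - s * y⁻¹) ^ 2)
      = Real.sqrt π := by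
  have hder : ∀ y ∈ Set.Ioi (0:ℝ), HasDerivWithinAt
      (fun y : ℝ => Real.sqrt π * (c * y - s * y⁻¹))
      (Real.sqrt π * (c + s * y⁻¹ ^ 2)) (Set.Ioi 0) y := by
    intro y hy
    have h1 : HasDerivAt (fun y : ℝ => c * y - s * y⁻¹) (c + s * y⁻¹ ^ 2) y := by
      have ha : HasDerivAt (fun y : ℝ => c * y) c y := by
        simpa using (hasDerivAt_id y).const_mul c
      have hb : HasDerivAt (fun y : ℝ => s * y⁻¹) (s * -(y ^ 2)⁻¹) y :=
        (hasDerivAt_inv (ne_of_gt (Set.mem_Ioi.mp hy))).const_mul s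
      have := ha.sub hb
      refine this.congr_deriv ?_
      rw [inv_pow]
      ring
    exact ((h1.const_mul (Real.sqrt π)).congr_deriv (by ring)).hasDerivWithinAt
  have hinj : Set.InjOn (fun y : ℝ => Real.sqrt π * (c * y - s * y⁻¹)) (Set.Ioi 0) := by
    have hmono : StrictMonoOn (fun y : ℝ => Real.sqrt π * (c * y - s * y⁻¹)) (Set.Ioi 0) := by
      intro u hu v hv huv
      have hu' : (0:ℝ) < u := hu
      have hv' : (0:ℝ) < v := hv
      have hsπ : (0:ℝ) < Real.sqrt π := Real.sqrt_pos.mpr Real.pi_pos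
      apply mul_lt_mul_of_pos_left _ hsπ
      have : u⁻¹ = 1/u := one_div u |>.symm
      have h2 : v⁻¹ < u⁻¹ := by
        apply inv_strictAnti₀ hu' huv
      nlinarith
    exact hmono.injOn
  have := integral_image_eq_integral_abs_deriv_smul measurableSet_Ioi hder hinj
    (fun t : ℝ => Real.exp (-t ^ 2))
  rw [image_sub_univ hc hs, setIntegral_univ] at this
  have hgauss : ∫ t : ℝ, Real.exp (-t ^ 2) = Real.sqrt π := by
    have := integral_gaussian 1
    simpa using this
  rw [hgauss] at this
  have heq : ∫ y in Set.Ioi (0:ℝ),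
      |Real.sqrt π * (c + s * y⁻¹ ^ 2)| • Real.exp (-(Real.sqrt π * (c * y - s * y⁻¹)) ^ 2)
      = ∫ y in Set.Ioi (0:ℝ),
      Real.sqrt π * (c + s * y⁻¹ ^ 2) * Real.exp (-π * (c * y - s * y⁻¹) ^ 2) := by
    apply setIntegral_congr_fun measurableSet_Ioi
    intro y hy
    have hy' : (0:ℝ) < y := hy
    simp only [smul_eq_mul]
    have habs : |Real.sqrt π * (c + s * y⁻¹ ^ 2)| = Real.sqrt π * (c + s * y⁻¹ ^ 2) := by
      apply abs_of_nonneg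
      exact mul_nonneg (Real.sqrt_nonneg π) (by positivity)
    rw [habs]
    congr 1
    rw [mul_pow, Real.sq_sqrt Real.pi_pos.le]
    ring
  rw [heq] at this
  exact this.symm

lemma base_value {c s : ℝ} (hc : 0 < c) (hs : 0 < s) :
    ∫ y in Set.Ioi (0:ℝ), y⁻¹ ^ 2 * Real.exp (-π * (c * y - s * y⁻¹) ^ 2) = 1 / (2 * s) := by
  set I₁ := ∫ y in Set.Ioi (0:ℝ), Real.exp (-π * (c * y - s * y⁻¹) ^ 2) with hI₁
  have h1 : (∫ y in Set.Ioi (0:ℝ), y⁻¹ ^ 2 * Real.exp (-π * (c * y - s * y⁻¹) ^ 2))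
      = c / s * I₁ := key_subst1 hc hs
  have hsplit : ∫ y in Set.Ioi (0:ℝ),
      Real.sqrt π * (c + s * y⁻¹ ^ 2) * Real.exp (-π * (c * y - s * y⁻¹) ^ 2)
      = Real.sqrt π * c * I₁ + Real.sqrt π * s * (c / s * I₁) := by
    rw [← h1]
    have hfun : (fun y : ℝ => Real.sqrt π * (c + s * y⁻¹ ^ 2) *
          Real.exp (-π * (c * y - s * y⁻¹) ^ 2))
        = fun y : ℝ => Real.sqrt π * c * Real.exp (-π * (c * y - s * y⁻¹) ^ 2)
            + Real.sqrt π * s * (y⁻¹ ^ 2 * Real.exp (-π * (c * y - s * y⁻¹) ^ 2)) := by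
      funext y; ring
    rw [hfun, integral_add ((integrableOn_I1 hc hs).const_mul _)
      ((integrableOn_I2 hc hs).const_mul _), integral_const_mul, integral_const_mul]
  rw [key_subst2 hc hs] at hsplit
  have hπ : Real.sqrt π ≠ 0 := by positivity
  have h2 : Real.sqrt π * (2 * c * I₁) = Real.sqrt π * 1 := by
    rw [mul_one]
    conv_rhs => rw [hsplit]
    field_simp
    ring
  have h3 : 2 * c * I₁ = 1 := mul_left_cancel₀ hπ h2
  rw [h1]
  rw [div_mul_eq_mul_div, div_eq_div_iff (ne_of_gt hs) (by positivity : (2*s:ℝ) ≠ 0)]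
  linear_combination s * h3

noncomputable def Jint (n : ℕ) (r₂ r₃ t : ℝ) : ℝ → ℝ := fun y =>
  y ^ ((n : ℝ) - 2) * physHermite n (Real.sqrt π * (t * y + r₂ * y⁻¹)) *
    Real.exp (-π * (t * y + r₂ * y⁻¹) ^ 2 - π * r₃ * y⁻¹ ^ 2)

noncomputable def Jval (n : ℕ) (r₂ r₃ t : ℝ) : ℝ :=
  2 ^ ((n : ℝ) - 1) * π ^ ((n : ℝ) / 2) * (Real.sqrt (r₂ ^ 2 + r₃) + r₂) ^ n *
    (Real.sqrt (r₂ ^ 2 + r₃))⁻¹ * Real.exp (-2 * π * t * (Real.sqrt (r₂ ^ 2 + r₃) + r₂))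

lemma split_exp (t y r₂ r₃ : ℝ) :
    Real.exp (-π * (t * y + r₂ * y⁻¹) ^ 2 - π * r₃ * y⁻¹ ^ 2)
      = Real.exp (-(Real.sqrt π * (t * y + r₂ * y⁻¹)) ^ 2) * Real.exp (-π * r₃ * y⁻¹ ^ 2) := by
  rw [← Real.exp_add]
  congr 1
  rw [mul_pow, Real.sq_sqrt Real.pi_pos.le]
  ring

lemma contOn_Jint (n : ℕ) (r₂ r₃ t : ℝ) : ContinuousOn (Jint n r₂ r₃ t) (Set.Ioi 0) := by
  have h1 : ContinuousOn (fun y : ℝ => y ^ ((n:ℝ) - 2)) (Set.Ioi 0) := fun y hy =>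
    (Real.continuousAt_rpow_const y _ (Or.inl (ne_of_gt hy))).continuousWithinAt
  have hinv : ContinuousOn (fun y : ℝ => y⁻¹) (Set.Ioi 0) :=
    continuousOn_inv₀.mono (fun y hy => ne_of_gt hy)
  have h2 : ContinuousOn (fun y : ℝ => t * y + r₂ * y⁻¹) (Set.Ioi 0) :=
    (continuousOn_const.mul continuousOn_id).add (continuousOn_const.mul hinv)
  have h3 : ContinuousOn
      (fun y : ℝ => physHermite n (Real.sqrt π * (t * y + r₂ * y⁻¹))) (Set.Ioi 0) := by
    have he : (fun y : ℝ => physHermite n (Real.sqrt π * (t * y + r₂ * y⁻¹)))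
        = fun y : ℝ => (hermP n).eval (Real.sqrt π * (t * y + r₂ * y⁻¹)) :=
      funext fun y => physHermite_eq n _
    rw [he]
    exact (hermP n).continuous_aeval.comp_continuousOn (continuousOn_const.mul h2)
  have h4 : ContinuousOn
      (fun y : ℝ => Real.exp (-π * (t * y + r₂ * y⁻¹) ^ 2 - π * r₃ * y⁻¹ ^ 2)) (Set.Ioi 0) :=
    Real.continuous_exp.comp_continuousOn
      ((continuousOn_const.mul (h2.pow 2)).sub (continuousOn_const.mul (hinv.pow 2)))
  exact (h1.mul h3).mul h4

lemma meas_Jint (n : ℕ) (r₂ r₃ t : ℝ) :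
    AEStronglyMeasurable (Jint n r₂ r₃ t) (volume.restrict (Set.Ioi 0)) :=
  (contOn_Jint n r₂ r₃ t).aestronglyMeasurable measurableSet_Ioi

lemma main_ind (r₂ r₃ : ℝ) (hr : 0 < r₂ ^ 2 + r₃) (n : ℕ) :
    ∀ r₁ : ℝ, 0 < r₁ →
      IntegrableOn (Jint n r₂ r₃ r₁) (Set.Ioi 0) volume ∧
      ∫ y in Set.Ioi (0:ℝ), Jint n r₂ r₃ r₁ y = Jval n r₂ r₃ r₁ := by
  set s : ℝ := Real.sqrt (r₂ ^ 2 + r₃) with hs_def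
  have hs : 0 < s := Real.sqrt_pos.mpr hr
  have hs2 : s ^ 2 = r₂ ^ 2 + r₃ := Real.sq_sqrt hr.le
  induction n with
  | zero =>
    intro r₁ hr₁
    -- pointwise identity on Ioi 0
    have hpt : ∀ y ∈ Set.Ioi (0:ℝ), Jint 0 r₂ r₃ r₁ y
        = Real.exp (-2 * π * r₁ * (s + r₂)) *
            (y⁻¹ ^ 2 * Real.exp (-π * (r₁ * y - s * y⁻¹) ^ 2)) := by
      intro y hy
      have hy' : (0:ℝ) < y := hy
      have hyne : y ≠ 0 := ne_of_gt hy'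
      have hherm : physHermite 0 (Real.sqrt π * (r₁ * y + r₂ * y⁻¹)) = 1 := by
        rw [physHermite_eq]; simp [hermP]
      have hrp : y ^ ((0:ℕ) - 2 : ℝ) = y⁻¹ ^ 2 := by
        norm_num
      have hexp : Real.exp (-π * (r₁ * y + r₂ * y⁻¹) ^ 2 - π * r₃ * y⁻¹ ^ 2)
          = Real.exp (-2 * π * r₁ * (s + r₂)) * Real.exp (-π * (r₁ * y - s * y⁻¹) ^ 2) := by
        rw [← Real.exp_add]
        congr 1
        have hinv : y * y⁻¹ = 1 := mul_inv_cancel₀ hyne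
        linear_combination (-2*π*r₁*r₂ - 2*π*r₁*s) * hinv + (π * y⁻¹^2) * hs2
      show y ^ ((0:ℕ) - 2 : ℝ) * physHermite 0 (Real.sqrt π * (r₁ * y + r₂ * y⁻¹)) *
          Real.exp (-π * (r₁ * y + r₂ * y⁻¹) ^ 2 - π * r₃ * y⁻¹ ^ 2) = _
      rw [hherm, hrp, hexp]
      ring
    constructor
    · apply IntegrableOn.congr_fun (((integrableOn_I2 hr₁ hs).const_mul
        (Real.exp (-2 * π * r₁ * (s + r₂)))))
        (fun y hy => (hpt y hy).symm) measurableSet_Ioi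
    · rw [setIntegral_congr_fun measurableSet_Ioi hpt, integral_const_mul,
        base_value hr₁ hs]
      show _ = Jval 0 r₂ r₃ r₁
      unfold Jval
      rw [← hs_def]
      norm_num
      ring
  | succ n IH =>
    intro r₁ hr₁
    -- choose δ and the Hermite growth constant
    set δ : ℝ := min (1/2) ((r₂ ^ 2 + r₃) / (2 * (r₂ ^ 2 + 1))) with hδ_def
    have hδ0 : 0 < δ := lt_min (by norm_num) (by positivity)
    have hδh : δ ≤ 1/2 := min_le_left _ _
    have hδB : δ * r₂ ^ 2 ≤ (r₂ ^ 2 + r₃) / 2 := by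
      have h1 : δ ≤ (r₂ ^ 2 + r₃) / (2 * (r₂ ^ 2 + 1)) := min_le_right _ _
      have h2 : (0:ℝ) < 2 * (r₂ ^ 2 + 1) := by positivity
      rw [le_div_iff₀ h2] at h1
      nlinarith [sq_nonneg r₂, hδ0.le]
    obtain ⟨C, hC0, hC⟩ := poly_growth (hermP (n + 1)) hδ0
    set A : ℝ := (1 - δ) * π * r₁ ^ 2 / 4 with hA_def
    set B : ℝ := π * (r₂ ^ 2 + r₃) / 2 with hB_def
    have h1δ : (0:ℝ) < 1 - δ := by linarith
    have hA : 0 < A := by rw [hA_def]; positivity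
    have hB : 0 < B := by rw [hB_def]; positivity
    set Cb : ℝ := Real.sqrt π * C * Real.exp (3 * π * r₁ * |r₂|) with hCb_def
    have hCb0 : 0 ≤ Cb := by positivity
    -- the derivative function
    set F' : ℝ → ℝ → ℝ := fun t y => -Real.sqrt π * Jint (n + 1) r₂ r₃ t y with hF'_def
    have key := hasDerivAt_integral_of_dominated_loc_of_deriv_le
      (F := fun t => Jint n r₂ r₃ t) (F' := F')
      (μ := volume.restrict (Set.Ioi 0)) (x₀ := r₁)
      (bound := fun y => Cb * (y ^ ((n:ℝ) - 1) * Real.exp (-A * y ^ 2 - B * y⁻¹ ^ 2)))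
      (Metric.ball_mem_nhds r₁ (half_pos hr₁))
      (Filter.Eventually.of_forall (fun t => meas_Jint n r₂ r₃ t))
      (IH r₁ hr₁).1
      (((meas_Jint (n+1) r₂ r₃ r₁).const_mul (-Real.sqrt π)))
      ?_ ?_ ?_
    · -- conclusion
      obtain ⟨hFint', hderiv⟩ := key
      have hsπ : Real.sqrt π ≠ 0 := by positivity
      have hint : IntegrableOn (Jint (n+1) r₂ r₃ r₁) (Set.Ioi 0) := by
        have h2 := hFint'.const_mul (-(Real.sqrt π))⁻¹
        have hfe : (fun y => (-(Real.sqrt π))⁻¹ * F' r₁ y) = Jint (n+1) r₂ r₃ r₁ := by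
          funext y
          simp only [hF'_def]
          field_simp
        rwa [hfe] at h2
      refine ⟨hint, ?_⟩
      have hFeq : (fun t => Jval n r₂ r₃ t)
          =ᶠ[nhds r₁] (fun t => ∫ y in Set.Ioi (0:ℝ), Jint n r₂ r₃ t y) :=
        Filter.eventually_of_mem (isOpen_Ioi.mem_nhds hr₁) (fun t ht => ((IH t ht).2).symm)
      have hderiv2 : HasDerivAt (fun t => Jval n r₂ r₃ t)
          (∫ y in Set.Ioi (0:ℝ), F' r₁ y) r₁ := hderiv.congr_of_eventuallyEq hFeq
      set K : ℝ := 2 ^ ((n:ℝ) - 1) * π ^ ((n:ℝ) / 2) * (s + r₂) ^ n * s⁻¹ with hK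
      set E : ℝ := Real.exp (-2 * π * r₁ * (s + r₂)) with hE
      have hJd : HasDerivAt (fun t => Jval n r₂ r₃ t) (K * E * (-(2 * π * (s + r₂)))) r₁ := by
        have hlin : HasDerivAt (fun t : ℝ => -2 * π * t * (s + r₂)) (-(2 * π * (s + r₂))) r₁ := by
          have hfl : (fun t : ℝ => -2 * π * t * (s + r₂))
              = fun t : ℝ => t * (-(2 * π * (s + r₂))) := by funext t; ring
          rw [hfl]
          simpa using (hasDerivAt_id r₁).mul_const (-(2 * π * (s + r₂)))
        have hexp := hlin.exp.const_mul K
        have hJ : (fun t => Jval n r₂ r₃ t) = fun t => K * Real.exp (-2 * π * t * (s + r₂)) := by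
          funext t
          simp only [Jval]
          rfl
        rw [hJ, hE]
        refine hexp.congr_deriv ?_
        ring
      have hDval := hderiv2.unique hJd
      have hFJ : ∫ y in Set.Ioi (0:ℝ), F' r₁ y
          = -Real.sqrt π * ∫ y in Set.Ioi (0:ℝ), Jint (n+1) r₂ r₃ r₁ y := by
        simp only [hF'_def]
        exact integral_const_mul _ _
      rw [hFJ] at hDval
      set I : ℝ := ∫ y in Set.Ioi (0:ℝ), Jint (n+1) r₂ r₃ r₁ y with hI
      have hππ : Real.sqrt π * Real.sqrt π = π := Real.mul_self_sqrt Real.pi_pos.le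
      have h1 : Real.sqrt π * I = 2 * π * (s + r₂) * K * E := by linear_combination -hDval
      have h2 : Real.sqrt π * I = Real.sqrt π * (2 * Real.sqrt π * (s + r₂) * (K * E)) := by
        linear_combination h1 - (2 * (s + r₂) * (K * E)) * hππ
      have hIval : I = 2 * Real.sqrt π * (s + r₂) * (K * E) := mul_left_cancel₀ hsπ h2
      show I = Jval (n+1) r₂ r₃ r₁
      rw [hIval]
      simp only [Jval]
      rw [← hs_def, ← hE]
      have hc1 : (2:ℝ) ^ ((((n+1):ℕ):ℝ) - 1) = 2 ^ ((n:ℝ) - 1) * 2 := by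
        rw [show (((n+1:ℕ)):ℝ) - 1 = ((n:ℝ) - 1) + 1 by push_cast; ring,
          Real.rpow_add two_pos, Real.rpow_one]
      have hc2 : π ^ ((((n+1:ℕ)):ℝ) / 2) = π ^ ((n:ℝ) / 2) * Real.sqrt π := by
        rw [show (((n+1:ℕ)):ℝ) / 2 = (n:ℝ) / 2 + 1 / 2 by push_cast; ring,
          Real.rpow_add Real.pi_pos]
        congr 1
        rw [Real.sqrt_eq_rpow]
      rw [hc1, hc2, pow_succ, hK]
      ring
    · -- h_bound
      filter_upwards [ae_restrict_mem measurableSet_Ioi] with y hy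
      intro t ht
      have hy' : (0:ℝ) < y := hy
      have hyne : y ≠ 0 := ne_of_gt hy'
      have hinv : y * y⁻¹ = 1 := mul_inv_cancel₀ hyne
      have hdist := Metric.mem_ball.mp ht
      rw [Real.dist_eq, abs_lt] at hdist
      have ht1 : r₁ / 2 < t := by linarith [hdist.1]
      have ht2 : t < 3 * r₁ / 2 := by linarith [hdist.2]
      have ht0 : 0 < t := lt_trans (half_pos hr₁) ht1
      have he : ((n + 1 : ℕ) : ℝ) - 2 = (n : ℝ) - 1 := by push_cast; ring
      simp only [hF'_def, Jint, he]
      rw [Real.norm_eq_abs, abs_mul, abs_neg,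
        abs_of_nonneg (Real.sqrt_nonneg π), abs_mul, abs_mul,
        abs_of_nonneg (Real.rpow_nonneg hy'.le _), abs_of_nonneg (Real.exp_pos _).le,
        physHermite_eq]
      have hx2 : (Real.sqrt π * (t * y + r₂ * y⁻¹)) ^ 2 = π * (t * y + r₂ * y⁻¹) ^ 2 := by
        rw [mul_pow, Real.sq_sqrt Real.pi_pos.le]
      have hexpand : δ * (π * (t * y + r₂ * y⁻¹) ^ 2) +
            (-π * (t * y + r₂ * y⁻¹) ^ 2 - π * r₃ * y⁻¹ ^ 2)
          = -((1 - δ) * π * t ^ 2 * y ^ 2) - ((1 - δ) * π * r₂ ^ 2 + π * r₃) * y⁻¹ ^ 2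
            - (1 - δ) * π * (2 * t * r₂) := by
        linear_combination (-(1 - δ) * π * 2 * t * r₂) * hinv
      have e1 : A * y ^ 2 ≤ (1 - δ) * π * t ^ 2 * y ^ 2 := by
        apply mul_le_mul_of_nonneg_right _ (sq_nonneg y)
        rw [hA_def]
        have hq : r₁ ^ 2 / 4 ≤ t ^ 2 := by nlinarith [ht1, hr₁]
        nlinarith [mul_le_mul_of_nonneg_left hq (mul_nonneg h1δ.le Real.pi_pos.le)]
      have e2 : B * y⁻¹ ^ 2 ≤ ((1 - δ) * π * r₂ ^ 2 + π * r₃) * y⁻¹ ^ 2 := by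
        apply mul_le_mul_of_nonneg_right _ (sq_nonneg y⁻¹)
        rw [hB_def]
        nlinarith [Real.pi_pos, hδB]
      have e3 : -((1 - δ) * π * (2 * t * r₂)) ≤ 3 * π * r₁ * |r₂| := by
        have a1 : (1 - δ) * (t * -r₂) ≤ (1 - δ) * (t * |r₂|) :=
          mul_le_mul_of_nonneg_left (mul_le_mul_of_nonneg_left (neg_le_abs r₂) ht0.le) h1δ.le
        have a3 : (0:ℝ) ≤ t * |r₂| := mul_nonneg ht0.le (abs_nonneg r₂)
        have a4 : (1 - δ) * (t * |r₂|) ≤ t * |r₂| := by nlinarith [hδ0.le, a3]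
        have a2 : t * |r₂| ≤ (3 * r₁ / 2) * |r₂| :=
          mul_le_mul_of_nonneg_right ht2.le (abs_nonneg r₂)
        have a5 : (1 - δ) * (t * -r₂) ≤ (3 * r₁ / 2) * |r₂| := le_trans a1 (le_trans a4 a2)
        nlinarith [mul_le_mul_of_nonneg_left a5 (le_of_lt Real.pi_pos)]
      calc Real.sqrt π * (y ^ ((n:ℝ) - 1) * |(hermP (n+1)).eval (Real.sqrt π * (t * y + r₂ * y⁻¹))| *
              Real.exp (-π * (t * y + r₂ * y⁻¹) ^ 2 - π * r₃ * y⁻¹ ^ 2))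
          ≤ Real.sqrt π * (y ^ ((n:ℝ) - 1) *
              (C * Real.exp (δ * (Real.sqrt π * (t * y + r₂ * y⁻¹)) ^ 2)) *
              Real.exp (-π * (t * y + r₂ * y⁻¹) ^ 2 - π * r₃ * y⁻¹ ^ 2)) := by
            have := hC (Real.sqrt π * (t * y + r₂ * y⁻¹))
            have h0 : (0:ℝ) ≤ y ^ ((n:ℝ) - 1) := Real.rpow_nonneg hy'.le _
            have h1 : (0:ℝ) ≤ Real.sqrt π := Real.sqrt_nonneg π
            have h2 : (0:ℝ) ≤ Real.exp (-π * (t * y + r₂ * y⁻¹) ^ 2 - π * r₃ * y⁻¹ ^ 2) :=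
              (Real.exp_pos _).le
            apply mul_le_mul_of_nonneg_left _ h1
            apply mul_le_mul_of_nonneg_right _ h2
            exact mul_le_mul_of_nonneg_left this h0
        _ = Real.sqrt π * C * (y ^ ((n:ℝ) - 1) *
              Real.exp (δ * (π * (t * y + r₂ * y⁻¹) ^ 2) +
                (-π * (t * y + r₂ * y⁻¹) ^ 2 - π * r₃ * y⁻¹ ^ 2))) := by
            rw [Real.exp_add, hx2]; ring
        _ ≤ Real.sqrt π * C * (y ^ ((n:ℝ) - 1) *
              Real.exp (3 * π * r₁ * |r₂| + (-A * y ^ 2 - B * y⁻¹ ^ 2))) := by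
            have h0 : (0:ℝ) ≤ y ^ ((n:ℝ) - 1) := Real.rpow_nonneg hy'.le _
            have h1 : (0:ℝ) ≤ Real.sqrt π * C := mul_nonneg (Real.sqrt_nonneg π) hC0
            apply mul_le_mul_of_nonneg_left _ h1
            apply mul_le_mul_of_nonneg_left _ h0
            apply Real.exp_le_exp.mpr
            rw [hexpand]
            linarith [e1, e2, e3]
        _ = Cb * (y ^ ((n:ℝ) - 1) * Real.exp (-A * y ^ 2 - B * y⁻¹ ^ 2)) := by
            rw [hCb_def, Real.exp_add]; ring
    · -- bound integrable
      exact (integrableOn_aux hA hB ((n:ℝ) - 1)).const_mul Cb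
    · -- h_diff
      filter_upwards [ae_restrict_mem measurableSet_Ioi] with y hy
      intro t ht
      have hy' : (0:ℝ) < y := hy
      have hyne : y ≠ 0 := ne_of_gt hy'
      have hinner : HasDerivAt (fun t : ℝ => Real.sqrt π * (t * y + r₂ * y⁻¹))
          (Real.sqrt π * y) t := by
        have h0 : HasDerivAt (fun t : ℝ => t * y + r₂ * y⁻¹) y t := by
          simpa using ((hasDerivAt_id t).mul_const y).add_const (r₂ * y⁻¹)
        simpa using h0.const_mul (Real.sqrt π)
      have houter := (hasDerivAt_hermGauss n (Real.sqrt π * (t * y + r₂ * y⁻¹))).comp t hinner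
      have hconst := houter.const_mul (y ^ ((n:ℝ) - 2) * Real.exp (-π * r₃ * y⁻¹ ^ 2))
      have hfun : (fun t : ℝ => Jint n r₂ r₃ t y)
          = fun t : ℝ => (y ^ ((n:ℝ) - 2) * Real.exp (-π * r₃ * y⁻¹ ^ 2)) *
              (((fun u => (hermP n).eval u * Real.exp (-u ^ 2)) ∘
                (fun t : ℝ => Real.sqrt π * (t * y + r₂ * y⁻¹))) t) := by
        funext u
        simp only [Jint, Function.comp, physHermite_eq, split_exp]
        ring
      rw [hfun]
      refine hconst.congr_deriv ?_
      simp only [hF'_def, Jint, Function.comp, physHermite_eq]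
      rw [split_exp]
      have he : ((n + 1 : ℕ) : ℝ) - 2 = ((n : ℝ) - 2) + 1 := by push_cast; ring
      rw [he, Real.rpow_add_one hyne]
      ring


theorem integral_hermite_J (n : ℕ) (r₁ r₂ r₃ : ℝ) (hr₁ : 0 < r₁) (hr : 0 < r₂ ^ 2 + r₃) :
    IntegrableOn
      (fun y : ℝ =>
        y ^ ((n : ℝ) - 2) * physHermite n (Real.sqrt π * (r₁ * y + r₂ * y⁻¹)) *
          Real.exp (-π * (r₁ * y + r₂ * y⁻¹) ^ 2 - π * r₃ * y⁻¹ ^ 2))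
      (Set.Ioi 0) volume ∧
    ∫ y in Set.Ioi (0 : ℝ),
        y ^ ((n : ℝ) - 2) * physHermite n (Real.sqrt π * (r₁ * y + r₂ * y⁻¹)) *
          Real.exp (-π * (r₁ * y + r₂ * y⁻¹) ^ 2 - π * r₃ * y⁻¹ ^ 2) =
      2 ^ ((n : ℝ) - 1) * π ^ ((n : ℝ) / 2) * (Real.sqrt (r₂ ^ 2 + r₃) + r₂) ^ n *
        (Real.sqrt (r₂ ^ 2 + r₃))⁻¹ *
        Real.exp (-2 * π * r₁ * (Real.sqrt (r₂ ^ 2 + r₃) + r₂)) := by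
  exact main_ind r₂ r₃ hr n r₁ hr₁
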